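/- As λ → ∞, H_λ(x,y) converges to exp(-e^{-x} - e^{-y}) (independence), and as λ → 0⁺, H_λ(x,y) converges to exp(-e^{-min(x,y)}) (complete dependence), for all x, y ∈ ℝ. -/

import Mathlib

open Real MeasureTheory Filter

noncomputable def stdPhi (t : ℝ) : ℝ := (Real.sqrt (2 * Real.pi))⁻¹ * Real.exp (-t ^ 2 / 2)

noncomputable def stdPhiCDF (x : ℝ) : ℝ := ∫ t in Set.Iic x, stdPhi t

noncomputable def HR (l x y : ℝ) : ℝ :=
  Real.exp (-(Real.exp (-x) * stdPhiCDF (l + (y - x) / (2 * l)) +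
              Real.exp (-y) * stdPhiCDF (l + (x - y) / (2 * l))))

lemma stdPhi_integrable : Integrable stdPhi := by
  have h := (integrable_exp_neg_mul_sq (b := (1:ℝ)/2) (by norm_num)).const_mul
    (Real.sqrt (2 * Real.pi))⁻¹
  refine h.congr (Eventually.of_forall fun t => ?_)
  unfold stdPhi
  ring_nf

lemma stdPhi_total : ∫ t, stdPhi t = 1 := by
  unfold stdPhi
  rw [MeasureTheory.integral_const_mul]
  have : (fun t : ℝ => Real.exp (-t ^ 2 / 2)) = fun t : ℝ => Real.exp (-((1:ℝ)/2) * t ^ 2) := by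
    funext t; ring_nf
  rw [this, integral_gaussian]
  have h2 : Real.pi / ((1:ℝ)/2) = 2 * Real.pi := by ring
  rw [h2, inv_mul_cancel₀]
  positivity

lemma tendsto_stdPhiCDF_atTop : Tendsto stdPhiCDF atTop (nhds 1) := by
  have h := tendsto_setIntegral_of_monotone (μ := (volume : Measure ℝ)) (f := stdPhi)
    (s := fun i : ℝ => Set.Iic i) (fun i => measurableSet_Iic)
    (fun i j hij => Set.Iic_subset_Iic.2 hij)
    (by rw [Set.iUnion_Iic]; exact stdPhi_integrable.integrableOn)
  rw [Set.iUnion_Iic, MeasureTheory.setIntegral_univ, stdPhi_total] at h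
  exact h

lemma tendsto_stdPhiCDF_atBot : Tendsto stdPhiCDF atBot (nhds 0) := by
  have h := tendsto_setIntegral_of_antitone (μ := (volume : Measure ℝ)) (f := stdPhi)
    (s := fun i : ℝ => Set.Iic (-i)) (fun i => measurableSet_Iic)
    (fun i j hij => Set.Iic_subset_Iic.2 (by linarith))
    ⟨0, stdPhi_integrable.integrableOn⟩
  have hempty : (⋂ i : ℝ, Set.Iic (-i)) = (∅ : Set ℝ) := by
    ext z
    simp only [Set.mem_iInter, Set.mem_Iic, Set.mem_empty_iff_false, iff_false, not_forall]
    exact ⟨-(z - 1), by push_neg; linarith⟩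
  rw [hempty] at h
  simp only [Measure.restrict_empty, integral_zero_measure] at h
  have h2 := h.comp tendsto_neg_atBot_atTop
  unfold stdPhiCDF
  simpa [Function.comp_def, stdPhiCDF] using h2

lemma continuous_stdPhiCDF : Continuous stdPhiCDF := by
  have hint : ∀ a b : ℝ, IntervalIntegrable stdPhi volume a b :=
    fun a b => stdPhi_integrable.intervalIntegrable
  have hc := intervalIntegral.continuous_primitive hint 0
  have : stdPhiCDF = fun b => stdPhiCDF 0 + ∫ t in (0:ℝ)..b, stdPhi t := by
    funext b
    rw [← intervalIntegral.integral_Iic_sub_Iic stdPhi_integrable.integrableOn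
      stdPhi_integrable.integrableOn]
    unfold stdPhiCDF; ring
  rw [this]
  exact continuous_const.add hc

lemma stdPhiCDF_zero : stdPhiCDF 0 = 1 / 2 := by
  have heven : ∀ t : ℝ, stdPhi (-t) = stdPhi t := by
    intro t; unfold stdPhi; rw [neg_pow]; ring_nf
  have h1 : stdPhiCDF 0 = ∫ t in Set.Ioi (0:ℝ), stdPhi t := by
    unfold stdPhiCDF
    calc ∫ t in Set.Iic (0:ℝ), stdPhi t = ∫ t in Set.Iic (0:ℝ), stdPhi (-t) := by
          simp only [heven]
      _ = ∫ t in Set.Ioi (-(0:ℝ)), stdPhi t := integral_comp_neg_Iic 0 stdPhi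
      _ = ∫ t in Set.Ioi (0:ℝ), stdPhi t := by rw [neg_zero]
  have h2 : stdPhiCDF 0 + ∫ t in Set.Ioi (0:ℝ), stdPhi t = 1 := by
    unfold stdPhiCDF
    rw [intervalIntegral.integral_Iic_add_Ioi stdPhi_integrable.integrableOn
      stdPhi_integrable.integrableOn, stdPhi_total]
  rw [← h1] at h2
  linarith

/-- HR is symmetric in x, y. -/
lemma HR_symm (l x y : ℝ) : HR l x y = HR l y x := by
  unfold HR; ring_nf

lemma HR_tendsto_of_le {x y : ℝ} (hxy : x ≤ y) :
    Tendsto (fun l => HR l x y) (nhdsWithin 0 (Set.Ioi 0))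
      (nhds (Real.exp (-Real.exp (-x)))) := by
  rcases eq_or_lt_of_le hxy with heq | hlt
  · subst heq
    have harg : ∀ l : ℝ, l + (x - x) / (2 * l) = l := by intro l; simp
    have hΦ : Tendsto (fun l : ℝ => stdPhiCDF (l + (x - x) / (2 * l)))
        (nhdsWithin 0 (Set.Ioi 0)) (nhds (1/2)) := by
      simp only [harg]
      have := (continuous_stdPhiCDF.tendsto 0).mono_left
        (nhdsWithin_le_nhds (s := Set.Ioi (0:ℝ)))
      rw [stdPhiCDF_zero] at this
      exact this
    have h : Tendsto (fun l => HR l x x) (nhdsWithin 0 (Set.Ioi 0))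
        (nhds (Real.exp (-(Real.exp (-x) * (1/2) + Real.exp (-x) * (1/2))))) := by
      unfold HR
      exact (Real.continuous_exp.tendsto _).comp
        (((tendsto_const_nhds.mul hΦ).add (tendsto_const_nhds.mul hΦ)).neg)
    rw [show (-Real.exp (-x)) = -(Real.exp (-x) * (1/2) + Real.exp (-x) * (1/2)) by ring]
    exact h
  · -- x < y
    have hpos : 0 < y - x := by linarith
    have hinv : Tendsto (fun l : ℝ => l⁻¹) (nhdsWithin 0 (Set.Ioi 0)) atTop :=
      tendsto_inv_nhdsGT_zero
    have hl0 : Tendsto (fun l : ℝ => l) (nhdsWithin 0 (Set.Ioi 0)) (nhds 0) :=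
      (continuous_id.tendsto 0).mono_left nhdsWithin_le_nhds
    have harg1 : Tendsto (fun l : ℝ => l + (y - x) / (2 * l))
        (nhdsWithin 0 (Set.Ioi 0)) atTop := by
      have h2 : Tendsto (fun l : ℝ => (y - x) / (2 * l)) (nhdsWithin 0 (Set.Ioi 0)) atTop := by
        have := hinv.const_mul_atTop (show (0:ℝ) < (y - x) / 2 by positivity)
        refine this.congr fun l => ?_
        field_simp
      exact tendsto_atTop_add_left_of_le' _ (-1)
        ((hl0.eventually (eventually_ge_nhds (by norm_num : (-1:ℝ) < 0))).mono fun l h => h) h2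
    have harg2 : Tendsto (fun l : ℝ => l + (x - y) / (2 * l))
        (nhdsWithin 0 (Set.Ioi 0)) atBot := by
      have h2 : Tendsto (fun l : ℝ => (x - y) / (2 * l)) (nhdsWithin 0 (Set.Ioi 0)) atBot := by
        have := tendsto_neg_atTop_atBot.comp
          (hinv.const_mul_atTop (show (0:ℝ) < (y - x) / 2 by positivity))
        refine this.congr fun l => ?_
        simp only [Function.comp_apply]
        field_simp
        ring
      exact tendsto_atBot_add_left_of_ge' _ 1
        ((hl0.eventually (eventually_le_nhds (by norm_num : (0:ℝ) < 1))).mono fun l h => h) h2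
    have hΦ1 := tendsto_stdPhiCDF_atTop.comp harg1
    have hΦ2 := tendsto_stdPhiCDF_atBot.comp harg2
    have h : Tendsto (fun l => HR l x y) (nhdsWithin 0 (Set.Ioi 0))
        (nhds (Real.exp (-(Real.exp (-x) * 1 + Real.exp (-y) * 0)))) := by
      unfold HR
      exact (Real.continuous_exp.tendsto _).comp
        (((tendsto_const_nhds.mul hΦ1).add (tendsto_const_nhds.mul hΦ2)).neg)
    rw [show (-Real.exp (-x)) = -(Real.exp (-x) * 1 + Real.exp (-y) * 0) by ring]
    exact h

/-- As λ → ∞ the Hüsler-Reiss distribution tends to independence; as λ → 0⁺ to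
complete dependence. -/
theorem HR_limits (x y : ℝ) :
    Tendsto (fun l => HR l x y) atTop
      (nhds (Real.exp (-Real.exp (-x) - Real.exp (-y)))) ∧
    Tendsto (fun l => HR l x y) (nhdsWithin 0 (Set.Ioi 0))
      (nhds (Real.exp (-Real.exp (-(min x y))))) := by
  constructor
  · have harg : ∀ c : ℝ, Tendsto (fun l : ℝ => l + c / (2 * l)) atTop atTop := by
      intro c
      have h0 : Tendsto (fun l : ℝ => c / (2 * l)) atTop (nhds 0) := by
        have := tendsto_inv_atTop_zero (𝕜 := ℝ)
        have h := this.const_mul (c / 2)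
        rw [mul_zero] at h
        refine h.congr fun l => ?_
        field_simp
      exact tendsto_atTop_add_right_of_le' _ (-1) tendsto_id
        ((h0.eventually (eventually_ge_nhds (by norm_num : (-1:ℝ) < 0))).mono fun l h => h)
    have hΦ1 := tendsto_stdPhiCDF_atTop.comp (harg (y - x))
    have hΦ2 := tendsto_stdPhiCDF_atTop.comp (harg (x - y))
    have h : Tendsto (fun l => HR l x y) atTop
        (nhds (Real.exp (-(Real.exp (-x) * 1 + Real.exp (-y) * 1)))) := by
      unfold HR
      exact (Real.continuous_exp.tendsto _).comp
        (((tendsto_const_nhds.mul hΦ1).add (tendsto_const_nhds.mul hΦ2)).neg)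
    rw [show (-Real.exp (-x) - Real.exp (-y)) = -(Real.exp (-x) * 1 + Real.exp (-y) * 1) by ring]
    exact h
  · rcases le_total x y with hxy | hyx
    · rw [min_eq_left hxy]
      exact HR_tendsto_of_le hxy
    · rw [min_eq_right hyx]
      have h := HR_tendsto_of_le hyx
      exact h.congr fun l => (HR_symm l y x)
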